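/- arXiv:2511.21534 — 2 statements merged into one kernel-verified Lean document; each statement's English description precedes it below -/
import Mathlib

section
/- Transport term for θ (remark after Proposition 2): when the parameter of interest is θ := Σ_{g=0}^{g_max} P(G=g|S=1) · E[τ(g)|S=1], the transport term T₃ becomes φ₁ − θ = Σ_{g=0}^{g_max} Cov( τ(g), π(g) ), where π(g) := P(G=g|S=1,𝓗) and the covariance is unconditional. -/
open MeasureTheory ProbabilityTheory Set

/-- The indicator function of a set, as a real-valued random variable. -/
noncomputable def ind {Ω : Type*} (s : Set Ω) : Ω → ℝ := s.indicator fun _ => 1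

/-- The covariance of two real random variables, `Cov(f,g) = E[f·g] − E[f]·E[g]`. -/
noncomputable def cov {Ω : Type*} {m : MeasurableSpace Ω} (μ : MeasureTheory.Measure Ω)
    (f g : Ω → ℝ) : ℝ :=
  (∫ ω, f ω * g ω ∂μ) - (∫ ω, f ω ∂μ) * ∫ ω, g ω ∂μ

lemma ind_mul {Ω : Type*} (s : Set Ω) (f : Ω → ℝ) :
    (fun ω => ind s ω * f ω) = s.indicator f := by
  funext ω; by_cases h : ω ∈ s <;> simp [ind, h]

lemma ind_inter {Ω : Type*} (s t : Set Ω) (ω : Ω) :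
    ind (s ∩ t) ω = ind s ω * ind t ω := by
  by_cases hs : ω ∈ s <;> by_cases ht : ω ∈ t <;> simp [ind, hs, ht]

/-- Key product rule for conditional expectation under conditional independence. -/
lemma condexp_indicator_mul_of_condIndepFun
    {Ω : Type*} (mH : MeasurableSpace Ω) [mΩ : MeasurableSpace Ω]
    [StandardBorelSpace Ω] [Nonempty Ω] (hH : mH ≤ mΩ)
    (μ : Measure Ω) [IsProbabilityMeasure μ]
    {X : Ω → ℝ} (hXm : Measurable X) (hXi : Integrable X μ)
    {β : Type*} [MeasurableSpace β] {Z : Ω → β} (hZm : Measurable Z)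
    (hind : CondIndepFun mH hH X Z μ) {B : Set β} (hB : MeasurableSet B) :
    μ[fun ω => ind (Z ⁻¹' B) ω * X ω | mH]
      =ᵐ[μ] fun ω => (μ⟦Z ⁻¹' B | mH⟧) ω * (μ[X | mH]) ω := by
  set κ : @Kernel Ω Ω mH mΩ := condExpKernel (mΩ := mΩ) μ mH with hκ
  set E : Set Ω := Z ⁻¹' B with hEdef
  have hE : MeasurableSet E := hZm hB
  -- a.e. all Borel sets product rule
  have h2 : ∀ᵐ ω ∂μ, ∀ ⦃s : Set ℝ⦄, MeasurableSet s →
      κ ω (X ⁻¹' s ∩ E) = κ ω (X ⁻¹' s) * κ ω E := by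
    apply MeasurableSpace.ae_induction_on_inter Real.borel_eq_generateFrom_Iic_rat
      Real.isPiSystem_Iic_rat
    · refine ae_of_all _ fun ω => ?_
      simp
    · have h1 : ∀ᵐ ω ∂μ, ∀ q : ℚ,
          κ ω (X ⁻¹' Iic (q : ℝ) ∩ E) = κ ω (X ⁻¹' Iic (q : ℝ)) * κ ω E :=
        ae_all_iff.2 fun q => ae_of_ae_trim hH
          (Kernel.indepFun_iff_measure_inter_preimage_eq_mul.mp hind
            _ _ measurableSet_Iic hB)
      filter_upwards [h1] with ω hω t ht
      simp only [iUnion_singleton_eq_range, mem_range] at ht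
      obtain ⟨q, rfl⟩ := ht
      exact hω q
    · refine ae_of_all _ fun ω t ht hC => ?_
      have hset : X ⁻¹' tᶜ ∩ E = E \ (X ⁻¹' t) := by
        ext x; simp only [mem_inter_iff, mem_preimage, mem_compl_iff, mem_diff]; tauto
      have h1 : κ ω (X ⁻¹' t ∩ E) + κ ω (X ⁻¹' tᶜ ∩ E) = κ ω E := by
        rw [hset, inter_comm]
        exact measure_inter_add_diff E (hXm ht)
      have hfin : ∀ s, κ ω s ≠ ⊤ := fun s => measure_ne_top _ _
      have hb : κ ω (X ⁻¹' tᶜ ∩ E) = κ ω E - κ ω (X ⁻¹' t ∩ E) :=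
        ENNReal.eq_sub_of_add_eq (hfin _) (by rw [add_comm]; exact h1)
      have h3 : κ ω (X ⁻¹' tᶜ) = 1 - κ ω (X ⁻¹' t) := by
        rw [preimage_compl, measure_compl (hXm ht) (hfin _), measure_univ]
      rw [hb, hC, h3, ENNReal.sub_mul (fun _ _ => hfin _), one_mul]
    · refine ae_of_all _ fun ω f hdisj hf hC => ?_
      have hd2 : Pairwise (Function.onFun Disjoint fun i => X ⁻¹' f i ∩ E) := fun i j hij =>
        ((hdisj hij).preimage X).mono inter_subset_left inter_subset_left
      rw [preimage_iUnion, iUnion_inter, measure_iUnion hd2 fun i => (hXm (hf i)).inter hE,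
        measure_iUnion (fun i j hij => (hdisj hij).preimage X) fun i => hXm (hf i),
      ]
      calc ∑' i, κ ω (X ⁻¹' f i ∩ E) = ∑' i, κ ω (X ⁻¹' f i) * κ ω E := tsum_congr hC
        _ = (∑' i, κ ω (X ⁻¹' f i)) * κ ω E := ENNReal.tsum_mul_right
  have h3 : ∀ᵐ ω ∂μ, Integrable X (κ ω) := hXi.condExpKernel_ae
  have h4 : ∀ᵐ ω ∂μ, ∫ y, ind E y * X y ∂(κ ω) = (κ ω E).toReal * ∫ y, X y ∂(κ ω) := by
    filter_upwards [h2, h3] with ω h2ω h3ω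
    rw [ind_mul, integral_indicator hE]
    have hmap : Measure.map X ((κ ω).restrict E) = κ ω E • Measure.map X (κ ω) := by
      ext s hs
      rw [Measure.map_apply hXm hs, Measure.restrict_apply (hXm hs), Measure.smul_apply,
        Measure.map_apply hXm hs, h2ω hs, smul_eq_mul, mul_comm]
    calc ∫ y in E, X y ∂(κ ω) = ∫ x, id x ∂(Measure.map X ((κ ω).restrict E)) :=
          (integral_map hXm.aemeasurable aestronglyMeasurable_id).symm
      _ = (κ ω E).toReal * ∫ x, id x ∂(Measure.map X (κ ω)) := by
          rw [hmap, integral_smul_measure, smul_eq_mul]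
      _ = (κ ω E).toReal * ∫ y, X y ∂(κ ω) := by
          rw [integral_map hXm.aemeasurable aestronglyMeasurable_id]; rfl
  have hint : Integrable (fun ω => ind E ω * X ω) μ := by
    rw [ind_mul]; exact hXi.indicator hE
  have e1 := condExp_ae_eq_integral_condExpKernel (μ := μ) hH hint
  have e2 := condExp_ae_eq_integral_condExpKernel (μ := μ) hH hXi
  have e3 := condExpKernel_ae_eq_condExp (μ := μ) hH hE
  filter_upwards [e1, e2, e3, h4] with ω he1 he2 he3 hh4
  rw [he1, hh4, ← measureReal_def, he3, ← he2]

lemma condexp_indicator_mul_sub_of_condIndepFun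
    {Ω : Type*} (mH : MeasurableSpace Ω) [mΩ : MeasurableSpace Ω]
    [StandardBorelSpace Ω] [Nonempty Ω] (hH : mH ≤ mΩ)
    (μ : Measure Ω) [IsProbabilityMeasure μ]
    {X₁ X₀ : Ω → ℝ} (hX1m : Measurable X₁) (hX1i : Integrable X₁ μ)
    (hX0m : Measurable X₀) (hX0i : Integrable X₀ μ)
    {β : Type*} [MeasurableSpace β] {Z : Ω → β} (hZm : Measurable Z)
    (hind1 : CondIndepFun mH hH X₁ Z μ) (hind0 : CondIndepFun mH hH X₀ Z μ)
    {B : Set β} (hB : MeasurableSet B) :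
    μ[fun ω => ind (Z ⁻¹' B) ω * (X₁ ω - X₀ ω) | mH]
      =ᵐ[μ] fun ω => (μ⟦Z ⁻¹' B | mH⟧) ω * (μ[fun ω' => X₁ ω' - X₀ ω' | mH]) ω := by
  have hE : MeasurableSet (Z ⁻¹' B) := hZm hB
  have hi1 : Integrable (fun ω => ind (Z ⁻¹' B) ω * X₁ ω) μ := by
    rw [ind_mul]; exact hX1i.indicator hE
  have hi0 : Integrable (fun ω => ind (Z ⁻¹' B) ω * X₀ ω) μ := by
    rw [ind_mul]; exact hX0i.indicator hE
  have h1 := condexp_indicator_mul_of_condIndepFun mH hH μ hX1m hX1i hZm hind1 hB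
  have h0 := condexp_indicator_mul_of_condIndepFun mH hH μ hX0m hX0i hZm hind0 hB
  have hsub : (fun ω => ind (Z ⁻¹' B) ω * (X₁ ω - X₀ ω))
      = fun ω => (fun ω' => ind (Z ⁻¹' B) ω' * X₁ ω') ω
          - (fun ω' => ind (Z ⁻¹' B) ω' * X₀ ω') ω := by
    funext ω; ring
  have e1 : μ[fun ω => ind (Z ⁻¹' B) ω * (X₁ ω - X₀ ω) | mH]
      =ᵐ[μ] μ[fun ω => ind (Z ⁻¹' B) ω * X₁ ω | mH]
        - μ[fun ω => ind (Z ⁻¹' B) ω * X₀ ω | mH] := by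
    rw [hsub]; exact condExp_sub hi1 hi0 mH
  have e2 : μ[fun ω' => X₁ ω' - X₀ ω' | mH] =ᵐ[μ] μ[X₁ | mH] - μ[X₀ | mH] :=
    condExp_sub hX1i hX0i mH
  filter_upwards [e1, e2, h1, h0] with ω he1 he2 hh1 hh0
  simp only [Pi.sub_apply] at he1 he2
  rw [he1, he2, hh1, hh0]
  ring

section Aux
variable {Ω : Type*} (mH : MeasurableSpace Ω) [mΩ : MeasurableSpace Ω]
  (μ : Measure Ω) [IsProbabilityMeasure μ]

lemma cond_eq_on_subalg {s : Set Ω} (hs : MeasurableSet s)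
    (hsH : ∀ t, MeasurableSet[mH] t → μ (s ∩ t) = μ s * μ t) (hc0 : μ s ≠ 0) :
    ∀ t, MeasurableSet[mH] t → (μ[|s]) t = μ t := by
  intro t ht
  rw [cond_apply hs, hsH t ht, ← mul_assoc, ENNReal.inv_mul_cancel hc0 (measure_ne_top μ s),
    one_mul]

lemma trim_cond_eq (hH : mH ≤ mΩ) {s : Set Ω} (hs : MeasurableSet s)
    (hsH : ∀ t, MeasurableSet[mH] t → μ (s ∩ t) = μ s * μ t) (hc0 : μ s ≠ 0) :
    (μ[|s]).trim hH = μ.trim hH := by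
  refine @Measure.ext Ω mH _ _ fun t ht => ?_
  rw [trim_measurableSet_eq hH ht, trim_measurableSet_eq hH ht,
    cond_eq_on_subalg mH μ hs hsH hc0 t ht]

lemma integral_cond_eq_of_subalg_meas (hH : mH ≤ mΩ) {s : Set Ω} (hs : MeasurableSet s)
    (hsH : ∀ t, MeasurableSet[mH] t → μ (s ∩ t) = μ s * μ t) (hc0 : μ s ≠ 0)
    (f : Ω → ℝ) (hf : StronglyMeasurable[mH] f) :
    ∫ x, f x ∂(μ[|s]) = ∫ x, f x ∂μ :=
  calc ∫ x, f x ∂(μ[|s]) = ∫ x, f x ∂((μ[|s]).trim hH) := integral_trim hH hf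
    _ = ∫ x, f x ∂(μ.trim hH) := by rw [trim_cond_eq mH μ hH hs hsH hc0]
    _ = ∫ x, f x ∂μ := (integral_trim hH hf).symm

omit [IsProbabilityMeasure μ] in
lemma integral_cond' {s : Set Ω} (hs : MeasurableSet s) (f : Ω → ℝ) :
    ∫ x, f x ∂(μ[|s]) = (μ s).toReal⁻¹ * ∫ x, ind s x * f x ∂μ := by
  rw [ProbabilityTheory.cond, integral_smul_measure, ENNReal.toReal_inv, smul_eq_mul,
    ind_mul s f, ← integral_indicator hs]

lemma pg_transfer (hH : mH ≤ mΩ)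
    {s Gg : Set Ω} (hs : MeasurableSet s) (hGg : MeasurableSet Gg)
    (hsH : ∀ t, MeasurableSet[mH] t → μ (s ∩ t) = μ s * μ t) (hc0 : μ s ≠ 0)
    (π : Ω → ℝ) (hπ : π = (μ[|s])[ind Gg | mH]) (hπb : ∀ᵐ ω ∂μ, ‖π ω‖ ≤ 1) :
    μ[ind (s ∩ Gg) | mH] =ᵐ[μ] fun ω => (μ s).toReal * π ω := by
  haveI : IsProbabilityMeasure (μ[|s]) := cond_isProbabilityMeasure hc0
  have hcR : (μ s).toReal ≠ 0 := ENNReal.toReal_ne_zero.mpr ⟨hc0, measure_ne_top μ s⟩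
  have πSM : StronglyMeasurable[mH] π := by rw [hπ]; exact stronglyMeasurable_condExp
  have πint : Integrable π μ :=
    Integrable.mono' (integrable_const 1) ((πSM.mono hH).aestronglyMeasurable) hπb
  have hf : Integrable (ind (s ∩ Gg)) μ := (integrable_const 1).indicator (hs.inter hGg)
  refine (ae_eq_condExp_of_forall_setIntegral_eq hH hf
    (fun t _ _ => (πint.const_mul _).integrableOn) ?_
    ((πSM.const_mul _).aestronglyMeasurable)).symm
  intro t ht _
  have hGgInd : Integrable (ind Gg) (μ[|s]) := (integrable_const 1).indicator hGg
  have step : ∫ x in t, π x ∂μ = ((μ[|s]) (Gg ∩ t)).toReal := by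
    calc ∫ x in t, π x ∂μ = ∫ x, t.indicator π x ∂μ := (integral_indicator (hH t ht)).symm
      _ = ∫ x, t.indicator π x ∂(μ[|s]) :=
          (integral_cond_eq_of_subalg_meas mH μ hH hs hsH hc0 _ (πSM.indicator ht)).symm
      _ = ∫ x in t, π x ∂(μ[|s]) := integral_indicator (hH t ht)
      _ = ∫ x in t, ind Gg x ∂(μ[|s]) := by rw [hπ]; exact setIntegral_condExp hH hGgInd ht
      _ = ((μ[|s]) (Gg ∩ t)).toReal := by
          rw [show (ind Gg : Ω → ℝ) = Gg.indicator (fun _ => 1) from rfl,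
            setIntegral_indicator hGg, setIntegral_const, smul_eq_mul, mul_one, inter_comm, measureReal_def]
  rw [integral_const_mul, step, cond_apply hs,
    show s ∩ (Gg ∩ t) = (s ∩ Gg) ∩ t from by ext x; simp only [mem_inter_iff]; tauto,
    show (ind (s ∩ Gg) : Ω → ℝ) = (s ∩ Gg).indicator (fun _ => 1) from rfl,
    setIntegral_indicator (hs.inter hGg), setIntegral_const, smul_eq_mul, mul_one,
    ENNReal.toReal_mul, ENNReal.toReal_inv, ← mul_assoc, mul_inv_cancel₀ hcR, one_mul,
    inter_comm t, measureReal_def]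

end Aux

/-- **Transport term for θ (remark after Proposition 2).**  When the parameter of interest
is `θ = Σ_g P(G=g|S=1)·E[τ(g)|S=1]`, under the transportability assumptions the transport
term `T₃` becomes `φ₁ − θ = Σ_g Cov(τ(g), π(g))`, where `π(g) = P(G=g|S=1,𝓗)` and the
covariance is unconditional. -/
theorem transport_term_for_theta
    {Ω : Type*} [mΩ : MeasurableSpace Ω] [StandardBorelSpace Ω] [Nonempty Ω]
    (μ : Measure Ω) [IsProbabilityMeasure μ]
    (gmax : ℕ)
    (S A G : Ω → ℕ)
    (hS : ∀ ω, S ω = 1 ∨ S ω = 2) (hSmeas : Measurable S)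
    (hSpos : ∀ s, (s = 1 ∨ s = 2) → 0 < μ {ω | S ω = s})
    (hA : ∀ ω, A ω ≤ 1) (hG : ∀ ω, G ω ≤ gmax)
    (hAmeas : Measurable A) (hGmeas : Measurable G)
    (Ypo : ℕ → ℕ → Ω → ℝ)
    (hYpomeas : ∀ a ≤ 1, ∀ g ≤ gmax, Measurable (Ypo a g))
    (hYposq : ∀ a ≤ 1, ∀ g ≤ gmax, MemLp (Ypo a g) 2 μ)
    (Ya : ℕ → Ω → ℝ)
    (hYa : ∀ a ω, Ya a ω = ∑ g ∈ Finset.range (gmax + 1), ind {ω' | G ω' = g} ω * Ypo a g ω)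
    (Y : Ω → ℝ)
    (hY : ∀ ω, Y ω = ind {ω' | A ω' = 1} ω * Ya 1 ω + ind {ω' | A ω' = 0} ω * Ya 0 ω)
    (mH : MeasurableSpace Ω) (hH : mH ≤ mΩ)
    (pg : ℕ → ℕ → Ω → ℝ)
    (hpg : ∀ s g, pg s g = (μ[|{ω | S ω = s}])[ind {ω | G ω = g} | mH])
    (hpgbdd : ∀ s g, ∀ᵐ ω ∂μ, 0 ≤ pg s g ω ∧ pg s g ω ≤ 1)
    (hpgmeas : ∀ s g, Measurable[mH] (pg s g))
    (htrans : ∀ a ≤ 1, ∀ g ≤ gmax,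
      CondIndepFun mH hH (Ypo a g) (fun ω => (S ω, G ω)) μ)
    (hSH : Indep (MeasurableSpace.comap S inferInstance) mH μ)
    (θ : ℝ)
    (hθ : θ = ∑ g ∈ Finset.range (gmax + 1),
        ((μ[|{ω | S ω = 1}]) {ω | G ω = g}).toReal
          * ∫ ω, (Ypo 1 g ω - Ypo 0 g ω) ∂(μ[|{ω | S ω = 1}])) :
    (∫ ω, (Ya 1 ω - Ya 0 ω) ∂(μ[|{ω | S ω = 1}])) - θ
      = ∑ g ∈ Finset.range (gmax + 1),
          cov μ (fun ω => Ypo 1 g ω - Ypo 0 g ω) (pg 1 g) := by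
  letI : MeasurableSpace Ω := mΩ
  have hgmem : ∀ g ∈ Finset.range (gmax + 1), g ≤ gmax := fun g hg =>
    Finset.mem_range_succ_iff.mp hg
  set s1 : Set Ω := {ω | S ω = 1} with hs1def
  have hs1 : MeasurableSet[mΩ] s1 := hSmeas (measurableSet_singleton 1)
  have hs1' : MeasurableSet[MeasurableSpace.comap S inferInstance] s1 :=
    ⟨{1}, measurableSet_singleton 1, rfl⟩
  have hc0 : μ s1 ≠ 0 := (hSpos 1 (Or.inl rfl)).ne'
  have hcR : (μ s1).toReal ≠ 0 := ENNReal.toReal_ne_zero.mpr ⟨hc0, measure_ne_top μ s1⟩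
  haveI : IsProbabilityMeasure (μ[|s1]) := cond_isProbabilityMeasure hc0
  have hsH : ∀ t, MeasurableSet[mH] t → μ (s1 ∩ t) = μ s1 * μ t := fun t ht =>
    (Indep_iff _ _ _).mp hSH s1 t hs1' ht
  -- condexp of `ind s1` is the constant `μ s1`
  have hS1const : μ[ind s1 | mH] =ᵐ[μ] fun _ => (μ s1).toReal := by
    have hsm : StronglyMeasurable[MeasurableSpace.comap S inferInstance] (ind s1) :=
      stronglyMeasurable_const.indicator hs1'
    refine (condExp_indep_eq hSmeas.comap_le hH hsm hSH).trans (ae_of_all _ fun ω => ?_)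
    show ∫ x, ind s1 x ∂μ = (μ s1).toReal
    rw [show (ind s1 : Ω → ℝ) = s1.indicator (fun _ => 1) from rfl, integral_indicator (μ := μ) hs1,
      setIntegral_const, smul_eq_mul, mul_one, measureReal_def]
  -- integrability of the τ's
  have hint_g : ∀ g ≤ gmax, Integrable (fun ω => Ypo 1 g ω - Ypo 0 g ω) μ := fun g hg =>
    ((hYposq 1 le_rfl g hg).integrable one_le_two).sub
      ((hYposq 0 (Nat.zero_le 1) g hg).integrable one_le_two)
  have hτm : ∀ g ≤ gmax, Measurable[mΩ] (fun ω => Ypo 1 g ω - Ypo 0 g ω) := fun g hg =>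
    (hYpomeas 1 le_rfl g hg).sub (hYpomeas 0 (Nat.zero_le 1) g hg)
  have hint_g1 : ∀ g ≤ gmax,
      Integrable (fun ω => ind {ω' | G ω' = g} ω * (Ypo 1 g ω - Ypo 0 g ω)) (μ[|s1]) := by
    intro g hg
    rw [ind_mul]
    refine Integrable.indicator (μ := μ[|s1]) ?_ (hGmeas (measurableSet_singleton g))
    exact ((hint_g g hg).restrict).smul_measure (ENNReal.inv_ne_top.2 hc0)
  -- expand the LHS integral as a sum
  have hYsub : (fun ω => Ya 1 ω - Ya 0 ω) =
      fun ω => ∑ g ∈ Finset.range (gmax + 1),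
        ind {ω' | G ω' = g} ω * (Ypo 1 g ω - Ypo 0 g ω) := by
    funext ω
    rw [hYa 1 ω, hYa 0 ω, ← Finset.sum_sub_distrib]
    exact Finset.sum_congr rfl fun g _ => by ring
  have hLHS : ∫ ω, (Ya 1 ω - Ya 0 ω) ∂(μ[|s1])
      = ∑ g ∈ Finset.range (gmax + 1),
          ∫ ω, ind {ω' | G ω' = g} ω * (Ypo 1 g ω - Ypo 0 g ω) ∂(μ[|s1]) := by
    calc ∫ ω, (Ya 1 ω - Ya 0 ω) ∂(μ[|s1])
        = ∫ ω, ∑ g ∈ Finset.range (gmax + 1),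
            ind {ω' | G ω' = g} ω * (Ypo 1 g ω - Ypo 0 g ω) ∂(μ[|s1]) := by rw [hYsub]
      _ = _ := integral_finset_sum _ fun g hg => hint_g1 g (hgmem g hg)
  rw [hLHS, hθ, ← Finset.sum_sub_distrib]
  refine Finset.sum_congr rfl fun g hgR => ?_
  have hg : g ≤ gmax := hgmem g hgR
  set Gg : Set Ω := {ω' | G ω' = g} with hGgdef
  have hGgm : MeasurableSet[mΩ] Gg := hGmeas (measurableSet_singleton g)
  -- π facts
  have hπ : pg 1 g = (μ[|s1])[ind Gg | mH] := hpg 1 g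
  have πSM : StronglyMeasurable[mH] (pg 1 g) := by rw [hπ]; exact stronglyMeasurable_condExp
  have hπb : ∀ᵐ ω ∂μ, ‖pg 1 g ω‖ ≤ 1 := by
    filter_upwards [hpgbdd 1 g] with ω h
    rw [Real.norm_eq_abs, abs_le]
    exact ⟨by linarith [h.1], h.2⟩
  have πint : Integrable (pg 1 g) μ :=
    Integrable.mono' (integrable_const 1) ((πSM.mono hH).aestronglyMeasurable) hπb
  have hZm : Measurable[mΩ] fun ω => (S ω, G ω) := hSmeas.prodMk hGmeas
  -- step (c): E_{μ₁}[τ] = E_μ[τ]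
  have hstepc : ∫ x, (Ypo 1 g x - Ypo 0 g x) ∂(μ[|s1]) = ∫ x, (Ypo 1 g x - Ypo 0 g x) ∂μ := by
    have hB : MeasurableSet ({1} ×ˢ (univ : Set ℕ)) :=
      (measurableSet_singleton 1).prod MeasurableSet.univ
    have key := condexp_indicator_mul_sub_of_condIndepFun mH hH μ (hYpomeas 1 le_rfl g hg)
      ((hYposq 1 le_rfl g hg).integrable one_le_two) (hYpomeas 0 (Nat.zero_le 1) g hg)
      ((hYposq 0 (Nat.zero_le 1) g hg).integrable one_le_two) hZm
      (htrans 1 le_rfl g hg) (htrans 0 (Nat.zero_le 1) g hg) hB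
    have hpre : (fun ω => (S ω, G ω)) ⁻¹' ({1} ×ˢ (univ : Set ℕ)) = s1 := by
      ext ω; simp [hs1def, eq_comm]
    rw [hpre] at key
    have hi : Integrable (fun ω => ind s1 ω * (Ypo 1 g ω - Ypo 0 g ω)) μ := by
      rw [ind_mul]; exact (hint_g g hg).indicator hs1
    calc ∫ x, (Ypo 1 g x - Ypo 0 g x) ∂(μ[|s1])
        = (μ s1).toReal⁻¹ * ∫ x, ind s1 x * (Ypo 1 g x - Ypo 0 g x) ∂μ :=
          integral_cond' μ hs1 _
      _ = (μ s1).toReal⁻¹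
            * ∫ x, (μ[fun ω => ind s1 ω * (Ypo 1 g ω - Ypo 0 g ω) | mH]) x ∂μ := by
          rw [integral_condExp hH]
      _ = (μ s1).toReal⁻¹
            * ∫ x, (μ[ind s1 | mH]) x * (μ[fun ω' => Ypo 1 g ω' - Ypo 0 g ω' | mH]) x ∂μ := by
          rw [integral_congr_ae key]; rfl
      _ = (μ s1).toReal⁻¹
            * ∫ x, (μ s1).toReal * (μ[fun ω' => Ypo 1 g ω' - Ypo 0 g ω' | mH]) x ∂μ := by
          refine congrArg _ (integral_congr_ae ?_)
          filter_upwards [hS1const] with x hx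
          rw [hx]
      _ = (μ s1).toReal⁻¹
            * ((μ s1).toReal * ∫ x, (μ[fun ω' => Ypo 1 g ω' - Ypo 0 g ω' | mH]) x ∂μ) := by
          rw [integral_const_mul]
      _ = ∫ x, (μ[fun ω' => Ypo 1 g ω' - Ypo 0 g ω' | mH]) x ∂μ := by
          rw [← mul_assoc, inv_mul_cancel₀ hcR, one_mul]
      _ = ∫ x, (Ypo 1 g x - Ypo 0 g x) ∂μ := integral_condExp hH
  -- step (b): μ₁(G=g) = E_μ[π]
  have hstepb : ((μ[|s1]) Gg).toReal = ∫ x, pg 1 g x ∂μ := by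
    have h1 : ∫ x, pg 1 g x ∂μ = ∫ x, pg 1 g x ∂(μ[|s1]) :=
      (integral_cond_eq_of_subalg_meas mH μ hH hs1 hsH hc0 _ πSM).symm
    rw [h1, hπ, integral_condExp hH,
      show (ind Gg : Ω → ℝ) = Gg.indicator (fun _ => 1) from rfl, integral_indicator hGgm,
      setIntegral_const, smul_eq_mul, mul_one, measureReal_def]
  -- step (a): E_{μ₁}[1_{G=g} τ] = E_μ[τ π]
  have hstepa : ∫ x, ind Gg x * (Ypo 1 g x - Ypo 0 g x) ∂(μ[|s1])
      = ∫ x, (Ypo 1 g x - Ypo 0 g x) * pg 1 g x ∂μ := by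
    have hB2 : MeasurableSet ({1} ×ˢ ({g} : Set ℕ)) :=
      (measurableSet_singleton 1).prod (measurableSet_singleton g)
    have key2 := condexp_indicator_mul_sub_of_condIndepFun mH hH μ (hYpomeas 1 le_rfl g hg)
      ((hYposq 1 le_rfl g hg).integrable one_le_two) (hYpomeas 0 (Nat.zero_le 1) g hg)
      ((hYposq 0 (Nat.zero_le 1) g hg).integrable one_le_two) hZm
      (htrans 1 le_rfl g hg) (htrans 0 (Nat.zero_le 1) g hg) hB2
    have hpre2 : (fun ω => (S ω, G ω)) ⁻¹' ({1} ×ˢ ({g} : Set ℕ)) = s1 ∩ Gg := by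
      ext ω; simp [hs1def, hGgdef, eq_comm]
    rw [hpre2] at key2
    have hK := pg_transfer mH μ hH hs1 hGgm hsH hc0 (pg 1 g) hπ hπb
    have hi2 : Integrable (fun ω => ind (s1 ∩ Gg) ω * (Ypo 1 g ω - Ypo 0 g ω)) μ := by
      rw [ind_mul]; exact (hint_g g hg).indicator (hs1.inter hGgm)
    have hπτint : Integrable (fun ω => pg 1 g ω * (Ypo 1 g ω - Ypo 0 g ω)) μ := by
      refine Integrable.mono' (hint_g g hg).norm
        (((πSM.mono hH).aestronglyMeasurable).mul (hτm g hg).aestronglyMeasurable) ?_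
      filter_upwards [hπb] with ω hb'
      rw [norm_mul]
      calc ‖pg 1 g ω‖ * ‖Ypo 1 g ω - Ypo 0 g ω‖
          ≤ 1 * ‖Ypo 1 g ω - Ypo 0 g ω‖ := mul_le_mul_of_nonneg_right hb' (norm_nonneg _)
        _ = ‖Ypo 1 g ω - Ypo 0 g ω‖ := one_mul _
    have pull : μ[fun ω => pg 1 g ω * (Ypo 1 g ω - Ypo 0 g ω) | mH]
        =ᵐ[μ] fun ω => pg 1 g ω * (μ[fun ω' => Ypo 1 g ω' - Ypo 0 g ω' | mH]) ω := by
      have := condExp_mul_of_stronglyMeasurable_left πSM hπτint (hint_g g hg)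
      filter_upwards [this] with ω hω
      exact hω
    calc ∫ x, ind Gg x * (Ypo 1 g x - Ypo 0 g x) ∂(μ[|s1])
        = (μ s1).toReal⁻¹ * ∫ x, ind s1 x * (ind Gg x * (Ypo 1 g x - Ypo 0 g x)) ∂μ :=
          integral_cond' μ hs1 _
      _ = (μ s1).toReal⁻¹ * ∫ x, ind (s1 ∩ Gg) x * (Ypo 1 g x - Ypo 0 g x) ∂μ := by
          refine congrArg _ (integral_congr_ae (ae_of_all _ fun x => ?_))
          simp only [ind_inter]; ring
      _ = (μ s1).toReal⁻¹
            * ∫ x, (μ[fun ω => ind (s1 ∩ Gg) ω * (Ypo 1 g ω - Ypo 0 g ω) | mH]) x ∂μ := by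
          rw [integral_condExp hH]
      _ = (μ s1).toReal⁻¹ * ∫ x, (μ[ind (s1 ∩ Gg) | mH]) x
            * (μ[fun ω' => Ypo 1 g ω' - Ypo 0 g ω' | mH]) x ∂μ := by
          rw [integral_congr_ae key2]; rfl
      _ = (μ s1).toReal⁻¹ * ∫ x, ((μ s1).toReal * pg 1 g x)
            * (μ[fun ω' => Ypo 1 g ω' - Ypo 0 g ω' | mH]) x ∂μ := by
          refine congrArg _ (integral_congr_ae ?_)
          filter_upwards [hK] with x hx
          rw [hx]
      _ = (μ s1).toReal⁻¹ * ((μ s1).toReal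
            * ∫ x, pg 1 g x * (μ[fun ω' => Ypo 1 g ω' - Ypo 0 g ω' | mH]) x ∂μ) := by
          refine congrArg _ ?_
          rw [← integral_const_mul ((μ s1).toReal)]
          exact integral_congr_ae (ae_of_all _ fun x => by ring)
      _ = ∫ x, pg 1 g x * (μ[fun ω' => Ypo 1 g ω' - Ypo 0 g ω' | mH]) x ∂μ := by
          rw [← mul_assoc, inv_mul_cancel₀ hcR, one_mul]
      _ = ∫ x, (μ[fun ω => pg 1 g ω * (Ypo 1 g ω - Ypo 0 g ω) | mH]) x ∂μ :=
          (integral_congr_ae pull).symm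
      _ = ∫ x, pg 1 g x * (Ypo 1 g x - Ypo 0 g x) ∂μ := integral_condExp hH
      _ = ∫ x, (Ypo 1 g x - Ypo 0 g x) * pg 1 g x ∂μ :=
          integral_congr_ae (ae_of_all _ fun x => mul_comm _ _)
  simp only [cov]
  rw [hstepa, hstepb, hstepc]
  ring
end

section
/- Bias decomposition with undefined potential outcomes, main-effect part (Theorem 3, first display): ψ − φ₁ = Σ_{a∈{0,1}} (−1)^{1−a} Cov( Y^(a,0), ε_a ) + Σ_{a∈{0,1}} Σ_{n=0}^{g_max} (−1)^{1−a} Cov( γ(a), ε_a | N=n ) · P(N=n), where γ(a) := Y^(a) − Y^(a,0) and Cov(·,·|N=n) denotes covariance under P(·|N=n). -/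
open MeasureTheory ProbabilityTheory Set

open scoped ENNReal

section Aux

variable {Ω : Type*} {mΩ : MeasurableSpace Ω} {μ : Measure Ω} [IsProbabilityMeasure μ]

lemma ind_nonneg {s : Set Ω} (ω : Ω) : 0 ≤ ind s ω := by
  unfold ind; by_cases h : ω ∈ s <;> simp [h]

lemma ind_le_one {s : Set Ω} (ω : Ω) : ind s ω ≤ 1 := by
  unfold ind; by_cases h : ω ∈ s <;> simp [h]

lemma abs_ind_le_one {s : Set Ω} (ω : Ω) : |ind s ω| ≤ 1 := by
  rw [abs_of_nonneg (ind_nonneg ω)]; exact ind_le_one ω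

lemma ind_meas {m : MeasurableSpace Ω} {s : Set Ω} (hs : MeasurableSet[m] s) :
    Measurable[m] (ind s) := measurable_const.indicator hs

lemma ind_int {s : Set Ω} (hs : MeasurableSet s) : Integrable (ind s) μ :=
  (integrable_const (1 : ℝ)).indicator hs

lemma integral_ind {s : Set Ω} (hs : MeasurableSet s) :
    ∫ ω, ind s ω ∂μ = (μ s).toReal := by
  unfold ind
  rw [integral_indicator_const (1 : ℝ) hs, smul_eq_mul, mul_one]; rfl

/-- Tower identity for the product with an `m`-measurable factor. -/
lemma integral_mul_condexp (hm : mΩ ≤ ‹MeasurableSpace Ω›) : True := trivial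

end Aux

section Aux2

variable {Ω : Type*} {m : MeasurableSpace Ω} [mΩ : MeasurableSpace Ω] {μ : Measure Ω}
  [IsProbabilityMeasure μ]

/-- Tower identity for the product with an `m`-measurable factor. -/
lemma integral_mul_condexp' (hm : m ≤ mΩ) {Z X : Ω → ℝ}
    (hZ : StronglyMeasurable[m] Z) (hZX : Integrable (fun ω => Z ω * X ω) μ)
    (hX : Integrable X μ) :
    ∫ ω, Z ω * X ω ∂μ = ∫ ω, Z ω * (μ[X|m]) ω ∂μ := by
  have h : μ[Z * X|m] =ᵐ[μ] Z * μ[X|m] :=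
    condExp_mul_of_stronglyMeasurable_left hZ hZX hX
  have h2 : ∫ ω, (Z * X) ω ∂μ = ∫ ω, (μ[Z * X|m]) ω ∂μ :=
    (integral_condExp hm (f := Z * X)).symm
  calc ∫ ω, Z ω * X ω ∂μ = ∫ ω, (μ[Z * X|m]) ω ∂μ := h2
    _ = ∫ ω, (Z * μ[X|m]) ω ∂μ := integral_congr_ae h
    _ = ∫ ω, Z ω * (μ[X|m]) ω ∂μ := rfl

/-- Restricted lintegral of an `m`-measurable function in terms of the condexp density. -/
lemma setLintegral_eq_lintegral_mul_condexp (hm : m ≤ mΩ)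
    {B : Set Ω} (hB : MeasurableSet[mΩ] B) {g : Ω → ℝ≥0∞} (hg : Measurable[m] g) :
    ∫⁻ ω in B, g ω ∂μ = ∫⁻ ω, ENNReal.ofReal ((μ[ind B|m]) ω) * g ω ∂μ := by
  set c : Ω → ℝ := μ[ind B|m] with hc
  have hc_nonneg : 0 ≤ᵐ[μ] c := condExp_nonneg (Filter.Eventually.of_forall ind_nonneg)
  have hc_meas : Measurable[mΩ] (fun ω => ENNReal.ofReal (c ω)) :=
    ((stronglyMeasurable_condExp.mono hm).measurable).ennreal_ofReal
  have hg0 : Measurable[mΩ] g := hg.mono hm le_rfl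
  have key : (μ.restrict B).trim hm
      = (μ.withDensity fun ω => ENNReal.ofReal (c ω)).trim hm := by
    refine @Measure.ext Ω m _ _ fun s hs => ?_
    rw [trim_measurableSet_eq hm hs, trim_measurableSet_eq hm hs,
      Measure.restrict_apply (hm s hs), withDensity_apply _ (hm s hs)]
    have h1 : ∫⁻ ω in s, ENNReal.ofReal (c ω) ∂μ = ENNReal.ofReal (∫ ω in s, c ω ∂μ) :=
      (ofReal_integral_eq_lintegral_ofReal integrable_condExp.integrableOn
        (ae_restrict_of_ae hc_nonneg)).symm
    have h2 : ∫ ω in s, c ω ∂μ = ∫ ω in s, ind B ω ∂μ :=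
      setIntegral_condExp hm (ind_int hB) hs
    have h3 : ∫ ω in s, ind B ω ∂μ = (μ (s ∩ B)).toReal := by
      unfold ind
      rw [setIntegral_indicator hB, setIntegral_const, smul_eq_mul, mul_one]
      rfl
    rw [h1, h2, h3, ENNReal.ofReal_toReal (measure_ne_top _ _)]
  calc ∫⁻ ω in B, g ω ∂μ = ∫⁻ ω, g ω ∂((μ.restrict B).trim hm) :=
        (lintegral_trim hm hg).symm
    _ = ∫⁻ ω, g ω ∂((μ.withDensity fun ω => ENNReal.ofReal (c ω)).trim hm) := by rw [key]
    _ = ∫⁻ ω, g ω ∂(μ.withDensity fun ω => ENNReal.ofReal (c ω)) := lintegral_trim hm hg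
    _ = ∫⁻ ω, ENNReal.ofReal (c ω) * g ω ∂μ := by
        rw [lintegral_withDensity_eq_lintegral_mul μ hc_meas hg0]; rfl

/-- Integrability of `1_B / e` when `e` is (a version of) the conditional probability of `B`. -/
lemma integrable_ind_mul_inv (hm : m ≤ mΩ)
    {B : Set Ω} (hB : MeasurableSet[mΩ] B) {e : Ω → ℝ}
    (hesm : StronglyMeasurable[m] e) (heq : μ[ind B|m] =ᵐ[μ] e)
    (hepos : ∀ᵐ ω ∂μ, 0 < e ω) :
    Integrable (fun ω => ind B ω * (e ω)⁻¹) μ := by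
  have heinv_meas : Measurable[m] fun ω => ENNReal.ofReal (e ω)⁻¹ :=
    (hesm.measurable.inv).ennreal_ofReal
  have hfin : ∫⁻ ω in B, ENNReal.ofReal (e ω)⁻¹ ∂μ ≤ 1 := by
    rw [setLintegral_eq_lintegral_mul_condexp hm hB heinv_meas]
    have hae : (fun ω => ENNReal.ofReal ((μ[ind B|m]) ω) * ENNReal.ofReal (e ω)⁻¹)
        =ᵐ[μ] fun _ => (1 : ℝ≥0∞) := by
      filter_upwards [heq, hepos] with ω h1 h2
      rw [h1, ← ENNReal.ofReal_mul h2.le, mul_inv_cancel₀ h2.ne', ENNReal.ofReal_one]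
    rw [lintegral_congr_ae hae, lintegral_one, measure_univ]
  have heB : ∀ ω, ind B ω * (e ω)⁻¹ = B.indicator (fun ω => (e ω)⁻¹) ω := by
    intro ω
    unfold ind
    by_cases h : ω ∈ B <;> simp [h]
  have hio : Integrable (fun ω => (e ω)⁻¹) (μ.restrict B) := by
    refine ⟨((hesm.mono hm).measurable.inv).aestronglyMeasurable.restrict, ?_⟩
    rw [hasFiniteIntegral_iff_ofReal (ae_restrict_of_ae
      (hepos.mono fun ω h => inv_nonneg.mpr h.le))]
    exact lt_of_le_of_lt hfin ENNReal.one_lt_top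
  exact (IntegrableOn.integrable_indicator hio hB).congr
    (Filter.Eventually.of_forall fun ω => (heB ω).symm)

/-- Partition of an integral along the values of `N`. -/
lemma integral_eq_sum_partition {N : Ω → ℕ} (hNmeas : Measurable N) {gmax : ℕ}
    (hN : ∀ ω, N ω ≤ gmax) {f : Ω → ℝ} (hf : Integrable f μ) :
    ∫ ω, f ω ∂μ = ∑ n ∈ Finset.range (gmax + 1), ∫ ω, ind {ω' | N ω' = n} ω * f ω ∂μ := by
  have hpt : ∀ ω, f ω = ∑ n ∈ Finset.range (gmax + 1), ind {ω' | N ω' = n} ω * f ω := by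
    intro ω
    have : ∀ n, ind {ω' | N ω' = n} ω * f ω = if N ω = n then f ω else 0 := by
      intro n
      unfold ind
      by_cases h : N ω = n <;> simp [Set.indicator_apply, h, Set.mem_setOf_eq]
    simp_rw [this]
    rw [Finset.sum_ite_eq]
    simp [Nat.lt_succ_iff, hN ω]
  have hint : ∀ n ∈ Finset.range (gmax + 1),
      Integrable (fun ω => ind {ω' | N ω' = n} ω * f ω) μ := by
    intro n _
    refine hf.bdd_mul (c := 1) ?_ (Filter.Eventually.of_forall fun ω => by simpa using abs_ind_le_one ω)
    exact (ind_meas (hNmeas (measurableSet_singleton n))).aestronglyMeasurable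
  calc ∫ ω, f ω ∂μ = ∫ ω, ∑ n ∈ Finset.range (gmax + 1), ind {ω' | N ω' = n} ω * f ω ∂μ := by
        exact integral_congr_ae (Filter.Eventually.of_forall hpt)
    _ = ∑ n ∈ Finset.range (gmax + 1), ∫ ω, ind {ω' | N ω' = n} ω * f ω ∂μ :=
        integral_finset_sum _ hint

end Aux2

/-- **Bias decomposition with undefined potential outcomes, main-effect part (Theorem 3,
first display).**  In the reference population, under consistency given `N`, positivity,
conditional exchangeability given `(𝓕,N)`, and propensity scores that do not depend on `N`,
`ψ − φ₁ = Σ_a (−1)^{1−a} Cov(Y^(a,0), ε_a)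
  + Σ_a Σ_n (−1)^{1−a} Cov(γ(a), ε_a | N=n)·P(N=n)`,
where `γ(a) = Y^(a) − Y^(a,0)` and `Cov(·,·|N=n)` is the covariance under `P(·|N=n)`. -/
theorem bias_decomposition_undefined_potential_outcomes_phi1
    {Ω : Type*} [mΩ : MeasurableSpace Ω] [StandardBorelSpace Ω] [Nonempty Ω]
    (μ : Measure Ω) [IsProbabilityMeasure μ]
    (gmax : ℕ)
    (A N G : Ω → ℕ) (hA : ∀ ω, A ω ≤ 1) (hN : ∀ ω, N ω ≤ gmax)
    (hGN : ∀ᵐ ω ∂μ, G ω ≤ N ω)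
    (hAmeas : Measurable A) (hNmeas : Measurable N) (hGmeas : Measurable G)
    (Ypo : ℕ → ℕ → Ω → ℝ)
    (hYpomeas : ∀ a ≤ 1, ∀ g ≤ gmax, Measurable (Ypo a g))
    (hYposq : ∀ a ≤ 1, ∀ g ≤ gmax, MemLp (Ypo a g) 2 μ)
    (Ya : ℕ → Ω → ℝ)
    (hYa : ∀ a ω, Ya a ω = ∑ g ∈ Finset.range (gmax + 1), ind {ω' | G ω' = g} ω * Ypo a g ω)
    (Y : Ω → ℝ)
    (hY : ∀ ω, Y ω = ind {ω' | A ω' = 1} ω * Ya 1 ω + ind {ω' | A ω' = 0} ω * Ya 0 ω)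
    (mG mF : MeasurableSpace Ω) (hGF : mG ≤ mF) (hF : mF ≤ mΩ)
    (π e ε : ℕ → Ω → ℝ)
    (hπ : ∀ a, π a = μ[ind {ω | A ω = a} | mF])
    (he : ∀ a, e a = μ[ind {ω | A ω = a} | mG])
    -- the propensity scores do not depend on N
    (hπN : ∀ a ≤ 1,
      μ[ind {ω | A ω = a} | mF ⊔ MeasurableSpace.comap N inferInstance] =ᵐ[μ] π a)
    (heN : ∀ a ≤ 1,
      μ[ind {ω | A ω = a} | mG ⊔ MeasurableSpace.comap N inferInstance] =ᵐ[μ] e a)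
    (hπpos : ∀ a ≤ 1, ∀ᵐ ω ∂μ, 0 < π a ω)
    (hepos : ∀ a ≤ 1, ∀ᵐ ω ∂μ, 0 < e a ω)
    (hNpos : ∀ n ≤ gmax, 0 < μ {ω | N ω = n})
    -- conditional exchangeability given (𝓕, N)
    (hexch : ∀ a ≤ 1,
      CondIndepFun (mF ⊔ MeasurableSpace.comap N inferInstance)
        (sup_le hF hNmeas.comap_le) (Ya a) A μ)
    (hε : ∀ a ω, ε a ω = π a ω / e a ω)
    (hεint : ∀ a ≤ 1, Integrable (ε a) μ)
    (hεYint : ∀ a ≤ 1, Integrable (fun ω => Ya a ω * ε a ω) μ)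
    (hεY0int : ∀ a ≤ 1, Integrable (fun ω => Ypo a 0 ω * ε a ω) μ)
    (hwint : ∀ a ≤ 1, Integrable (fun ω => ind {ω' | A ω' = a} ω * Y ω / e a ω) μ) :
    ((∫ ω, ind {ω' | A ω' = 1} ω * Y ω / e 1 ω ∂μ)
        - ∫ ω, ind {ω' | A ω' = 0} ω * Y ω / e 0 ω ∂μ)
      - ∫ ω, (Ya 1 ω - Ya 0 ω) ∂μ
    = (∑ a ∈ Finset.range 2, (-1 : ℝ) ^ (1 - a) * cov μ (Ypo a 0) (ε a))
      + ∑ a ∈ Finset.range 2, ∑ n ∈ Finset.range (gmax + 1),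
          (-1 : ℝ) ^ (1 - a)
            * cov (μ[|{ω | N ω = n}]) (fun ω => Ya a ω - Ypo a 0 ω) (ε a)
            * (μ {ω | N ω = n}).toReal := by
  letI : MeasurableSpace Ω := mΩ
  have hmG : mG ≤ mΩ := hGF.trans hF
  have hm' : (mF ⊔ MeasurableSpace.comap N inferInstance) ≤ mΩ := sup_le hF hNmeas.comap_le
  have hm'' : (mG ⊔ MeasurableSpace.comap N inferInstance) ≤ mΩ := sup_le hmG hNmeas.comap_le
  have hBmeas : ∀ a : ℕ, MeasurableSet[mΩ] {ω | A ω = a} :=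
    fun a => hAmeas (measurableSet_singleton a)
  have hsnmeas : ∀ n : ℕ, MeasurableSet[mΩ] {ω | N ω = n} :=
    fun n => hNmeas (measurableSet_singleton n)
  have hesm : ∀ a, StronglyMeasurable[mG] (e a) := fun a => (he a) ▸ stronglyMeasurable_condExp
  have hπsm : ∀ a, StronglyMeasurable[mF] (π a) := fun a => (hπ a) ▸ stronglyMeasurable_condExp
  have hYameas : ∀ a, a ≤ 1 → Measurable[mΩ] (Ya a) := by
    intro a ha
    rw [funext (hYa a)]
    exact Finset.measurable_sum _ fun g hg =>
      (ind_meas (hGmeas (measurableSet_singleton g))).mul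
        (hYpomeas a ha g (Nat.lt_succ_iff.mp (Finset.mem_range.mp hg)))
  have hYpoint : ∀ a ≤ 1, ∀ g ≤ gmax, Integrable (Ypo a g) μ :=
    fun a ha g hg => (hYposq a ha g hg).integrable one_le_two
  have hYaint : ∀ a, a ≤ 1 → Integrable (Ya a) μ := by
    intro a ha
    rw [funext (hYa a)]
    refine integrable_finset_sum _ fun g hg => ?_
    refine (hYpoint a ha g (Nat.lt_succ_iff.mp (Finset.mem_range.mp hg))).bdd_mul (c := 1) ?_ ?_
    · exact (ind_meas (hGmeas (measurableSet_singleton g))).aestronglyMeasurable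
    · exact Filter.Eventually.of_forall fun ω => by simpa using abs_ind_le_one ω
  have hAe : ∀ a, a ≤ 1 → Integrable (fun ω => ind {ω' | A ω' = a} ω * (e a ω)⁻¹) μ := by
    intro a ha
    exact integrable_ind_mul_inv hmG (hBmeas a) (hesm a) (by rw [he a]) (hepos a ha)
  -- The key conditional-independence consequence: `π a` is also the conditional probability of
  -- `{A = a}` given the σ-algebra generated by `(𝓕, N)` and `Ya a`.
  have hP : ∀ a, a ≤ 1 → π a =ᵐ[μ]
      μ[ind {ω' | A ω' = a} | (mF ⊔ MeasurableSpace.comap N inferInstance)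
        ⊔ MeasurableSpace.comap (Ya a) inferInstance] := by
    intro a ha
    have h𝔪 : ((mF ⊔ MeasurableSpace.comap N inferInstance)
        ⊔ MeasurableSpace.comap (Ya a) inferInstance) ≤ mΩ :=
      sup_le hm' (hYameas a ha).comap_le
    have hπint : Integrable (π a) μ := (hπ a) ▸ integrable_condExp
    have hπ0 : 0 ≤ᵐ[μ] π a :=
      (hπ a) ▸ condExp_nonneg (Filter.Eventually.of_forall ind_nonneg)
    have hprod : ∀ t : Set ℝ, MeasurableSet t →
        μ[ind (Ya a ⁻¹' t ∩ {ω' | A ω' = a})|mF ⊔ MeasurableSpace.comap N inferInstance]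
          =ᵐ[μ] fun ω =>
            (μ[ind (Ya a ⁻¹' t)|mF ⊔ MeasurableSpace.comap N inferInstance]) ω * π a ω := by
      intro t ht
      have h := (condIndepFun_iff_condExp_inter_preimage_eq_mul
        (hYameas a ha) hAmeas).mp (hexch a ha) t {a} ht (measurableSet_singleton a)
      refine (Filter.EventuallyEq.trans ?_ h).trans ?_
      · rfl
      · filter_upwards [hπN a ha] with ω hω
        show _ * (μ[ind {ω' | A ω' = a}|mF ⊔ MeasurableSpace.comap N inferInstance]) ω = _
        rw [hω]
        rfl
    -- the two measures to compare on the generated σ-algebra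
    have hsetint : ∀ s : Set Ω,
        MeasurableSet[(mF ⊔ MeasurableSpace.comap N inferInstance)
          ⊔ MeasurableSpace.comap (Ya a) inferInstance] s →
        (μ ({ω' | A ω' = a} ∩ s)).toReal = ∫ ω in s, π a ω ∂μ := by
      have hfin2 : IsFiniteMeasure (μ.withDensity fun ω => ENNReal.ofReal (π a ω)) :=
        isFiniteMeasure_withDensity_ofReal hπint.hasFiniteIntegral
      have hI : ∀ s : Set Ω, MeasurableSet[mΩ] s → ∫ ω in s, π a ω ∂μ
          = ((μ.withDensity fun ω => ENNReal.ofReal (π a ω)) s).toReal := by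
        intro s hs
        rw [withDensity_apply _ hs,
          ← ofReal_integral_eq_lintegral_ofReal hπint.integrableOn (ae_restrict_of_ae hπ0),
          ENNReal.toReal_ofReal (integral_nonneg_of_ae (ae_restrict_of_ae hπ0))]
      -- the key computation on generators
      have hkey : ∀ s₁ : Set Ω, ∀ t : Set ℝ,
          MeasurableSet[mF ⊔ MeasurableSpace.comap N inferInstance] s₁ → MeasurableSet t →
          (μ ((s₁ ∩ Ya a ⁻¹' t) ∩ {ω' | A ω' = a})).toReal
            = ∫ ω in s₁ ∩ Ya a ⁻¹' t, π a ω ∂μ := by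
        intro s₁ t hs₁ ht
        have hs₁0 : MeasurableSet[mΩ] s₁ := hm' s₁ hs₁
        have htpre : MeasurableSet[mΩ] (Ya a ⁻¹' t) := (hYameas a ha) ht
        have hD : MeasurableSet[mΩ] (Ya a ⁻¹' t ∩ {ω' | A ω' = a}) := htpre.inter (hBmeas a)
        have step1 : (μ ((s₁ ∩ Ya a ⁻¹' t) ∩ {ω' | A ω' = a})).toReal
            = ∫ ω in s₁, ind (Ya a ⁻¹' t ∩ {ω' | A ω' = a}) ω ∂μ := by
          unfold ind
          rw [setIntegral_indicator hD, setIntegral_const, smul_eq_mul, mul_one,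
            Set.inter_assoc]
          rfl
        have step2 : ∫ ω in s₁, ind (Ya a ⁻¹' t ∩ {ω' | A ω' = a}) ω ∂μ
            = ∫ ω in s₁,
              (μ[ind (Ya a ⁻¹' t ∩ {ω' | A ω' = a})|mF ⊔ MeasurableSpace.comap N inferInstance]) ω
                ∂μ :=
          (setIntegral_condExp hm' (ind_int hD) hs₁).symm
        have step3 : ∫ ω in s₁,
              (μ[ind (Ya a ⁻¹' t ∩ {ω' | A ω' = a})|mF ⊔ MeasurableSpace.comap N inferInstance]) ω
                ∂μ
            = ∫ ω in s₁,
              (μ[ind (Ya a ⁻¹' t)|mF ⊔ MeasurableSpace.comap N inferInstance]) ω * π a ω ∂μ :=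
          integral_congr_ae (ae_restrict_of_ae (hprod t ht))
        have hfsm : StronglyMeasurable[mF ⊔ MeasurableSpace.comap N inferInstance]
            (fun ω => ind s₁ ω * π a ω) :=
          ((ind_meas hs₁).stronglyMeasurable).mul ((hπsm a).mono le_sup_left)
        have hfg_int : Integrable
            (fun ω => ind s₁ ω * π a ω * ind (Ya a ⁻¹' t) ω) μ := by
          refine hπint.mono ?_ (Filter.Eventually.of_forall fun ω => ?_)
          · exact (((ind_meas hs₁0).mul ((hπsm a).mono hF).measurable).mul
              (ind_meas htpre)).aestronglyMeasurable
          · have h1 := abs_ind_le_one (s := s₁) ω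
            have h2 := abs_ind_le_one (s := Ya a ⁻¹' t) ω
            have e1 : ‖ind s₁ ω * π a ω * ind (Ya a ⁻¹' t) ω‖
                = |ind s₁ ω| * |π a ω| * |ind (Ya a ⁻¹' t) ω| := by
              simp [abs_mul, Real.norm_eq_abs]
            rw [e1, Real.norm_eq_abs]
            calc |ind s₁ ω| * |π a ω| * |ind (Ya a ⁻¹' t) ω|
                ≤ 1 * |π a ω| * 1 := by
                  refine mul_le_mul (mul_le_mul h1 le_rfl (abs_nonneg _) zero_le_one) h2
                    (abs_nonneg _) (by positivity)
              _ = |π a ω| := by ring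
        have step4 : ∫ ω in s₁,
              (μ[ind (Ya a ⁻¹' t)|mF ⊔ MeasurableSpace.comap N inferInstance]) ω * π a ω ∂μ
            = ∫ ω in s₁ ∩ Ya a ⁻¹' t, π a ω ∂μ := by
          have tower := integral_mul_condexp' (μ := μ) hm' hfsm
            (by exact hfg_int) (ind_int htpre)
          have lhs_eq : ∫ ω, (fun ω => ind s₁ ω * π a ω) ω
                * (μ[ind (Ya a ⁻¹' t)|mF ⊔ MeasurableSpace.comap N inferInstance]) ω ∂μ
              = ∫ ω in s₁,
                (μ[ind (Ya a ⁻¹' t)|mF ⊔ MeasurableSpace.comap N inferInstance]) ω * π a ω ∂μ := by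
            rw [← integral_indicator hs₁0]
            congr 1
            funext ω
            unfold ind
            by_cases h : ω ∈ s₁ <;> simp [h, Set.indicator_apply] <;> ring
          have rhs_eq : ∫ ω, (fun ω => ind s₁ ω * π a ω) ω * ind (Ya a ⁻¹' t) ω ∂μ
              = ∫ ω in s₁ ∩ Ya a ⁻¹' t, π a ω ∂μ := by
            rw [← integral_indicator (hs₁0.inter htpre)]
            congr 1
            funext ω
            unfold ind
            by_cases h1 : ω ∈ s₁ <;> by_cases h2 : ω ∈ Ya a ⁻¹' t <;>
              simp [h1, h2, Set.indicator_apply, Set.mem_inter_iff]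
          rw [← lhs_eq, ← tower, rhs_eq]
        rw [step1, step2, step3, step4]
      -- extension to the generated σ-algebra
      have hgen : ((mF ⊔ MeasurableSpace.comap N inferInstance)
            ⊔ MeasurableSpace.comap (Ya a) inferInstance)
          = MeasurableSpace.generateFrom {s : Set Ω | ∃ s₁ t,
              MeasurableSet[mF ⊔ MeasurableSpace.comap N inferInstance] s₁
              ∧ MeasurableSet t ∧ s = s₁ ∩ Ya a ⁻¹' t} := by
        apply le_antisymm
        · refine sup_le (fun s hs => ?_) (fun s hs => ?_)
          · exact MeasurableSpace.measurableSet_generateFrom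
              ⟨s, Set.univ, hs, MeasurableSet.univ, by simp⟩
          · obtain ⟨t, ht, rfl⟩ := hs
            exact MeasurableSpace.measurableSet_generateFrom
              ⟨Set.univ, t, MeasurableSet.univ, ht, by simp⟩
        · refine MeasurableSpace.generateFrom_le ?_
          rintro s ⟨s₁, t, hs₁, ht, rfl⟩
          have hle1 : (mF ⊔ MeasurableSpace.comap N inferInstance)
              ≤ (mF ⊔ MeasurableSpace.comap N inferInstance)
                ⊔ MeasurableSpace.comap (Ya a) inferInstance := le_sup_left
          have hle2 : MeasurableSpace.comap (Ya a) inferInstance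
              ≤ (mF ⊔ MeasurableSpace.comap N inferInstance)
                ⊔ MeasurableSpace.comap (Ya a) inferInstance := le_sup_right
          exact MeasurableSet.inter (hle1 _ hs₁) (hle2 _ ⟨t, ht, rfl⟩)
      have hpi : IsPiSystem {s : Set Ω | ∃ s₁ t,
          MeasurableSet[mF ⊔ MeasurableSpace.comap N inferInstance] s₁
          ∧ MeasurableSet t ∧ s = s₁ ∩ Ya a ⁻¹' t} := by
        rintro s ⟨s₁, t, hs₁, ht, rfl⟩ s' ⟨s₂, u, hs₂, hu, rfl⟩ -
        refine ⟨s₁ ∩ s₂, t ∩ u, hs₁.inter hs₂, ht.inter hu, ?_⟩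
        ext ω
        simp only [Set.mem_inter_iff, Set.mem_preimage]
        tauto
      have hext : (μ.restrict {ω' | A ω' = a}).trim h𝔪
          = (μ.withDensity fun ω => ENNReal.ofReal (π a ω)).trim h𝔪 := by
        refine @ext_of_generate_finite Ω ((mF ⊔ MeasurableSpace.comap N inferInstance)
            ⊔ MeasurableSpace.comap (Ya a) inferInstance)
          ((μ.restrict {ω' | A ω' = a}).trim h𝔪)
          ((μ.withDensity fun ω => ENNReal.ofReal (π a ω)).trim h𝔪)
          _ hgen hpi ?_ ?_ ?_
        · infer_instance
        · rintro s ⟨s₁, t, hs₁, ht, rfl⟩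
          have hle1 : (mF ⊔ MeasurableSpace.comap N inferInstance)
              ≤ (mF ⊔ MeasurableSpace.comap N inferInstance)
                ⊔ MeasurableSpace.comap (Ya a) inferInstance := le_sup_left
          have hle2 : MeasurableSpace.comap (Ya a) inferInstance
              ≤ (mF ⊔ MeasurableSpace.comap N inferInstance)
                ⊔ MeasurableSpace.comap (Ya a) inferInstance := le_sup_right
          have hsm : MeasurableSet[(mF ⊔ MeasurableSpace.comap N inferInstance)
              ⊔ MeasurableSpace.comap (Ya a) inferInstance] (s₁ ∩ Ya a ⁻¹' t) :=
            MeasurableSet.inter (hle1 _ hs₁) (hle2 _ ⟨t, ht, rfl⟩)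
          rw [trim_measurableSet_eq h𝔪 hsm, trim_measurableSet_eq h𝔪 hsm,
            Measure.restrict_apply (h𝔪 _ hsm)]
          have hthis := hkey s₁ t hs₁ ht
          rw [hI _ (h𝔪 _ hsm)] at hthis
          exact (ENNReal.toReal_eq_toReal_iff' (measure_ne_top _ _) (measure_ne_top _ _)).mp hthis
        · have hu : MeasurableSet[(mF ⊔ MeasurableSpace.comap N inferInstance)
              ⊔ MeasurableSpace.comap (Ya a) inferInstance] (Set.univ : Set Ω) :=
            MeasurableSet.univ
          rw [trim_measurableSet_eq h𝔪 hu, trim_measurableSet_eq h𝔪 hu,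
            Measure.restrict_apply_univ]
          have h1 : ∫ ω in (Set.univ : Set Ω), π a ω ∂μ = (μ {ω' | A ω' = a}).toReal := by
            rw [setIntegral_univ, hπ a, integral_condExp hF, integral_ind (hBmeas a)]
          rw [hI _ MeasurableSet.univ] at h1
          exact (ENNReal.toReal_eq_toReal_iff' (measure_ne_top _ _) (measure_ne_top _ _)).mp h1.symm
      intro s hs
      calc (μ ({ω' | A ω' = a} ∩ s)).toReal
          = (((μ.restrict {ω' | A ω' = a}).trim h𝔪) s).toReal := by
            rw [trim_measurableSet_eq h𝔪 hs, Measure.restrict_apply (h𝔪 s hs), Set.inter_comm]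
        _ = (((μ.withDensity fun ω => ENNReal.ofReal (π a ω)).trim h𝔪) s).toReal := by
            rw [hext]
        _ = ∫ ω in s, π a ω ∂μ := by
            rw [trim_measurableSet_eq h𝔪 hs, ← hI s (h𝔪 s hs)]
    refine ae_eq_condExp_of_forall_setIntegral_eq h𝔪 (ind_int (hBmeas a))
      (fun s _ _ => hπint.integrableOn) (fun s hs _ => ?_) ?_
    · rw [← hsetint s hs]
      unfold ind
      rw [setIntegral_indicator (hBmeas a), setIntegral_const, smul_eq_mul, mul_one,
        Set.inter_comm]
      rfl
    · exact ⟨π a, (hπsm a).mono (le_trans le_sup_left le_sup_left), Filter.EventuallyEq.rfl⟩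
  -- On the event `{A = a}`, the observed outcome coincides with `Ya a`.
  have hYB : ∀ a, a ≤ 1 → ∀ ω,
      ind {ω' | A ω' = a} ω * Y ω = ind {ω' | A ω' = a} ω * Ya a ω := by
    intro a ha ω
    by_cases h : A ω = a
    · rw [hY ω]
      interval_cases a
      · have h0 : ω ∈ {ω' | A ω' = 0} := h
        have h1 : ω ∉ {ω' | A ω' = 1} := by simp [Set.mem_setOf_eq, h]
        unfold ind
        simp [Set.indicator_apply, h0, h1]
      · have h0 : ω ∉ {ω' | A ω' = 0} := by simp [Set.mem_setOf_eq, h]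
        have h1 : ω ∈ {ω' | A ω' = 1} := h
        unfold ind
        simp [Set.indicator_apply, h0, h1]
    · have hz : ind {ω' | A ω' = a} ω = 0 := by
        unfold ind; simp [Set.indicator_apply, h]
      rw [hz, zero_mul, zero_mul]
  -- ψ_a = E[Ya a ⋅ ε a]
  have hpsi : ∀ a, a ≤ 1 → ∫ ω, ind {ω' | A ω' = a} ω * Y ω / e a ω ∂μ
      = ∫ ω, Ya a ω * ε a ω ∂μ := by
    intro a ha
    have h𝔪 : ((mF ⊔ MeasurableSpace.comap N inferInstance)
        ⊔ MeasurableSpace.comap (Ya a) inferInstance) ≤ mΩ :=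
      sup_le hm' (hYameas a ha).comap_le
    have hleG : mG ≤ (mF ⊔ MeasurableSpace.comap N inferInstance)
        ⊔ MeasurableSpace.comap (Ya a) inferInstance :=
      hGF.trans (le_sup_left.trans le_sup_left)
    have hleYa : MeasurableSpace.comap (Ya a) inferInstance
        ≤ (mF ⊔ MeasurableSpace.comap N inferInstance)
          ⊔ MeasurableSpace.comap (Ya a) inferInstance := le_sup_right
    have hZsm : StronglyMeasurable[(mF ⊔ MeasurableSpace.comap N inferInstance)
        ⊔ MeasurableSpace.comap (Ya a) inferInstance] (fun ω => Ya a ω * (e a ω)⁻¹) := by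
      have hYam : Measurable[(mF ⊔ MeasurableSpace.comap N inferInstance)
          ⊔ MeasurableSpace.comap (Ya a) inferInstance] (Ya a) :=
        measurable_iff_comap_le.mpr hleYa
      exact hYam.stronglyMeasurable.mul ((hesm a).mono hleG).measurable.inv.stronglyMeasurable
    have hint1 : Integrable (fun ω => Ya a ω * (e a ω)⁻¹ * ind {ω' | A ω' = a} ω) μ := by
      refine (hwint a ha).congr (Filter.Eventually.of_forall fun ω => ?_)
      show ind {ω' | A ω' = a} ω * Y ω / e a ω = Ya a ω * (e a ω)⁻¹ * ind {ω' | A ω' = a} ω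
      rw [div_eq_mul_inv, hYB a ha ω]; ring
    calc ∫ ω, ind {ω' | A ω' = a} ω * Y ω / e a ω ∂μ
        = ∫ ω, Ya a ω * (e a ω)⁻¹ * ind {ω' | A ω' = a} ω ∂μ := by
          refine integral_congr_ae (Filter.Eventually.of_forall fun ω => ?_)
          show ind {ω' | A ω' = a} ω * Y ω / e a ω = Ya a ω * (e a ω)⁻¹ * ind {ω' | A ω' = a} ω
          rw [div_eq_mul_inv, hYB a ha ω]; ring
      _ = ∫ ω, Ya a ω * (e a ω)⁻¹
            * (μ[ind {ω' | A ω' = a}|(mF ⊔ MeasurableSpace.comap N inferInstance)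
                ⊔ MeasurableSpace.comap (Ya a) inferInstance]) ω ∂μ :=
          integral_mul_condexp' h𝔪 hZsm hint1 (ind_int (hBmeas a))
      _ = ∫ ω, Ya a ω * (e a ω)⁻¹ * π a ω ∂μ := by
          refine integral_congr_ae ?_
          filter_upwards [hP a ha] with ω hω
          rw [← hω]
      _ = ∫ ω, Ya a ω * ε a ω ∂μ := by
          refine integral_congr_ae (Filter.Eventually.of_forall fun ω => ?_)
          show Ya a ω * (e a ω)⁻¹ * π a ω = Ya a ω * ε a ω
          rw [hε a ω, div_eq_mul_inv]; ring
  -- E[1_{N=n} ⋅ ε a] = P(N = n)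
  have hNε : ∀ a, a ≤ 1 → ∀ n, ∫ ω, ind {ω' | N ω' = n} ω * ε a ω ∂μ
      = (μ {ω | N ω = n}).toReal := by
    intro a ha n
    have hcm : MeasurableSet[MeasurableSpace.comap N inferInstance] {ω | N ω = n} :=
      ⟨{n}, measurableSet_singleton n, rfl⟩
    have hle1 : MeasurableSpace.comap N inferInstance
        ≤ mF ⊔ MeasurableSpace.comap N inferInstance := le_sup_right
    have hle2 : MeasurableSpace.comap N inferInstance
        ≤ mG ⊔ MeasurableSpace.comap N inferInstance := le_sup_right
    have hle3 : mG ≤ mF ⊔ MeasurableSpace.comap N inferInstance := hGF.trans le_sup_left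
    have hle4 : mG ≤ mG ⊔ MeasurableSpace.comap N inferInstance := le_sup_left
    have hZsm' : StronglyMeasurable[mF ⊔ MeasurableSpace.comap N inferInstance]
        (fun ω => ind {ω' | N ω' = n} ω * (e a ω)⁻¹) :=
      ((ind_meas (hle1 _ hcm)).stronglyMeasurable).mul
        ((hesm a).mono hle3).measurable.inv.stronglyMeasurable
    have hZsm'' : StronglyMeasurable[mG ⊔ MeasurableSpace.comap N inferInstance]
        (fun ω => ind {ω' | N ω' = n} ω * (e a ω)⁻¹) :=
      ((ind_meas (hle2 _ hcm)).stronglyMeasurable).mul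
        ((hesm a).mono hle4).measurable.inv.stronglyMeasurable
    have hZB_int : Integrable
        (fun ω => ind {ω' | N ω' = n} ω * (e a ω)⁻¹ * ind {ω' | A ω' = a} ω) μ := by
      refine (hAe a ha).mono ?_ (Filter.Eventually.of_forall fun ω => ?_)
      · exact (((ind_meas (hsnmeas n)).mul
          ((hesm a).mono hmG).measurable.inv).mul (ind_meas (hBmeas a))).aestronglyMeasurable
      · have h1 := abs_ind_le_one (s := {ω' | N ω' = n}) ω
        have e1 : ‖ind {ω' | N ω' = n} ω * (e a ω)⁻¹ * ind {ω' | A ω' = a} ω‖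
            = |ind {ω' | N ω' = n} ω| * (|(e a ω)⁻¹| * |ind {ω' | A ω' = a} ω|) := by
          rw [Real.norm_eq_abs, abs_mul, abs_mul]; ring
        have e2 : ‖ind {ω' | A ω' = a} ω * (e a ω)⁻¹‖
            = |(e a ω)⁻¹| * |ind {ω' | A ω' = a} ω| := by
          rw [Real.norm_eq_abs, abs_mul]; ring
        rw [e1, e2]
        refine mul_le_of_le_one_left (by positivity) h1
    calc ∫ ω, ind {ω' | N ω' = n} ω * ε a ω ∂μ
        = ∫ ω, ind {ω' | N ω' = n} ω * (e a ω)⁻¹ * π a ω ∂μ := by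
          refine integral_congr_ae (Filter.Eventually.of_forall fun ω => ?_)
          show ind {ω' | N ω' = n} ω * ε a ω = ind {ω' | N ω' = n} ω * (e a ω)⁻¹ * π a ω
          rw [hε a ω, div_eq_mul_inv]; ring
      _ = ∫ ω, ind {ω' | N ω' = n} ω * (e a ω)⁻¹
            * (μ[ind {ω | A ω = a}|mF ⊔ MeasurableSpace.comap N inferInstance]) ω ∂μ := by
          refine integral_congr_ae ?_
          filter_upwards [hπN a ha] with ω hω
          rw [hω]
      _ = ∫ ω, ind {ω' | N ω' = n} ω * (e a ω)⁻¹ * ind {ω' | A ω' = a} ω ∂μ :=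
          (integral_mul_condexp' hm' hZsm' hZB_int (ind_int (hBmeas a))).symm
      _ = ∫ ω, ind {ω' | N ω' = n} ω * (e a ω)⁻¹
            * (μ[ind {ω | A ω = a}|mG ⊔ MeasurableSpace.comap N inferInstance]) ω ∂μ :=
          integral_mul_condexp' hm'' hZsm'' hZB_int (ind_int (hBmeas a))
      _ = ∫ ω, ind {ω' | N ω' = n} ω * (e a ω)⁻¹ * e a ω ∂μ := by
          refine integral_congr_ae ?_
          filter_upwards [heN a ha] with ω hω
          rw [hω]
      _ = ∫ ω, ind {ω' | N ω' = n} ω ∂μ := by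
          refine integral_congr_ae ?_
          filter_upwards [hepos a ha] with ω hω
          rw [mul_assoc, inv_mul_cancel₀ hω.ne', mul_one]
      _ = (μ {ω | N ω = n}).toReal := integral_ind (hsnmeas n)
  -- E[ε a] = 1
  have hεone : ∀ a, a ≤ 1 → ∫ ω, ε a ω ∂μ = 1 := by
    intro a ha
    rw [integral_eq_sum_partition hNmeas hN (hεint a ha)]
    rw [Finset.sum_congr rfl fun n _ => hNε a ha n]
    have hconst := integral_eq_sum_partition (μ := μ) hNmeas hN (integrable_const (1 : ℝ))
    simp only [mul_one] at hconst
    rw [Finset.sum_congr rfl fun n _ => (integral_ind (μ := μ) (hsnmeas n)).symm, ← hconst]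
    simp
  -- integrability of the pieces
  have hγε_int : ∀ a, a ≤ 1 →
      Integrable (fun ω => (Ya a ω - Ypo a 0 ω) * ε a ω) μ := by
    intro a ha
    refine ((hεYint a ha).sub (hεY0int a ha)).congr
      (Filter.Eventually.of_forall fun ω => ?_)
    show Ya a ω * ε a ω - Ypo a 0 ω * ε a ω = (Ya a ω - Ypo a 0 ω) * ε a ω
    ring
  have hγ_int : ∀ a, a ≤ 1 → Integrable (fun ω => Ya a ω - Ypo a 0 ω) μ :=
    fun a ha => (hYaint a ha).sub (hYpoint a ha 0 (Nat.zero_le _))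
  -- the conditional covariance terms
  have hcovn : ∀ a, a ≤ 1 → ∀ n, n ≤ gmax →
      cov (μ[|{ω | N ω = n}]) (fun ω => Ya a ω - Ypo a 0 ω) (ε a) * (μ {ω | N ω = n}).toReal
        = (∫ ω, ind {ω' | N ω' = n} ω * ((Ya a ω - Ypo a 0 ω) * ε a ω) ∂μ)
          - ∫ ω, ind {ω' | N ω' = n} ω * (Ya a ω - Ypo a 0 ω) ∂μ := by
    intro a ha n hn
    have hPn : (μ {ω | N ω = n}).toReal ≠ 0 :=
      ENNReal.toReal_ne_zero.mpr ⟨(hNpos n hn).ne', measure_ne_top _ _⟩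
    have hcond : ∀ f : Ω → ℝ, ∫ ω, f ω ∂(μ[|{ω | N ω = n}])
        = (μ {ω | N ω = n}).toReal⁻¹ * ∫ ω, ind {ω' | N ω' = n} ω * f ω ∂μ := by
      intro f
      rw [ProbabilityTheory.cond, integral_smul_measure, ENNReal.toReal_inv, smul_eq_mul]
      congr 1
      rw [← integral_indicator (hsnmeas n)]
      refine integral_congr_ae (Filter.Eventually.of_forall fun ω => ?_)
      unfold ind
      by_cases h : ω ∈ {ω' | N ω' = n} <;> simp [Set.indicator_apply, h]
    have h1 := hcond (fun ω => (Ya a ω - Ypo a 0 ω) * ε a ω)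
    have h2 := hcond (fun ω => Ya a ω - Ypo a 0 ω)
    have h3 := hcond (ε a)
    unfold cov
    rw [h1, h2, h3, hNε a ha n]
    field_simp
  -- summation over the partition
  have hsumcov : ∀ a, a ≤ 1 →
      ∑ n ∈ Finset.range (gmax + 1),
        cov (μ[|{ω | N ω = n}]) (fun ω => Ya a ω - Ypo a 0 ω) (ε a) * (μ {ω | N ω = n}).toReal
      = (∫ ω, (Ya a ω - Ypo a 0 ω) * ε a ω ∂μ) - ∫ ω, (Ya a ω - Ypo a 0 ω) ∂μ := by
    intro a ha
    rw [Finset.sum_congr rfl fun n hnn =>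
      hcovn a ha n (Nat.lt_succ_iff.mp (Finset.mem_range.mp hnn))]
    rw [Finset.sum_sub_distrib,
      ← integral_eq_sum_partition hNmeas hN (hγε_int a ha),
      ← integral_eq_sum_partition hNmeas hN (hγ_int a ha)]
  -- the unconditional covariance terms
  have hcov0 : ∀ a, a ≤ 1 → cov μ (Ypo a 0) (ε a)
      = (∫ ω, Ypo a 0 ω * ε a ω ∂μ) - ∫ ω, Ypo a 0 ω ∂μ := by
    intro a ha
    unfold cov
    rw [hεone a ha, mul_one]
  -- per-treatment-arm total
  have htot : ∀ a, a ≤ 1 →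
      cov μ (Ypo a 0) (ε a)
        + ∑ n ∈ Finset.range (gmax + 1),
            cov (μ[|{ω | N ω = n}]) (fun ω => Ya a ω - Ypo a 0 ω) (ε a)
              * (μ {ω | N ω = n}).toReal
      = (∫ ω, Ya a ω * ε a ω ∂μ) - ∫ ω, Ya a ω ∂μ := by
    intro a ha
    rw [hcov0 a ha, hsumcov a ha]
    have e1 : ∫ ω, (Ya a ω - Ypo a 0 ω) * ε a ω ∂μ
        = (∫ ω, Ya a ω * ε a ω ∂μ) - ∫ ω, Ypo a 0 ω * ε a ω ∂μ := by
      rw [← integral_sub (hεYint a ha) (hεY0int a ha)]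
      refine integral_congr_ae (Filter.Eventually.of_forall fun ω => ?_)
      show (Ya a ω - Ypo a 0 ω) * ε a ω = Ya a ω * ε a ω - Ypo a 0 ω * ε a ω
      ring
    have e2 : ∫ ω, (Ya a ω - Ypo a 0 ω) ∂μ
        = (∫ ω, Ya a ω ∂μ) - ∫ ω, Ypo a 0 ω ∂μ :=
      integral_sub (hYaint a ha) (hYpoint a ha 0 (Nat.zero_le _))
    rw [e1, e2]
    ring
  -- final assembly
  have hsub : ∫ ω, (Ya 1 ω - Ya 0 ω) ∂μ = (∫ ω, Ya 1 ω ∂μ) - ∫ ω, Ya 0 ω ∂μ :=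
    integral_sub (hYaint 1 le_rfl) (hYaint 0 (Nat.zero_le _))
  rw [hpsi 1 le_rfl, hpsi 0 (Nat.zero_le _), hsub]
  have ht0 := htot 0 (Nat.zero_le _)
  have ht1 := htot 1 le_rfl
  have hexp : ∀ f : ℕ → ℝ, ∑ a ∈ Finset.range 2, f a = f 0 + f 1 := fun f => by
    rw [Finset.sum_range_succ, Finset.sum_range_one]
  rw [hexp, hexp]
  simp only [Nat.sub_self, Nat.sub_zero, pow_zero, pow_one, one_mul, neg_one_mul, neg_mul,
    Finset.sum_neg_distrib]
  linarith [ht0, ht1]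
end
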